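/- arXiv:1705.02432 — 4 statements merged into one kernel-verified Lean document; each statement's English description precedes it below -/
import Mathlib

section
/- Let α > 0 and let x ∈ 𝒳 be a solution of Wright's equation x'(t) = -α(e^{x(t-1)} - 1). Then -α(e^α - 1) ≤ x(t) ≤ α for all t > 0. -/
open Real Set Filter

noncomputable section

/-- `x` solves Wright's equation `x'(t) = -α (e^{x(t-1)} - 1)` on all of `ℝ`. -/
def WrightSol (α : ℝ) (x : ℝ → ℝ) : Prop :=
  ∀ t : ℝ, HasDerivAt x (-α * (Real.exp (x (t - 1)) - 1)) t

/-- The space 𝒳: C¹ functions with `x 0 = 0`, `x' 0 > 0` and `x < 0` on `(-1,0)`. -/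
def InX (x : ℝ → ℝ) : Prop :=
  ContDiff ℝ 1 x ∧ x 0 = 0 ∧ 0 < deriv x 0 ∧ ∀ t ∈ Set.Ioo (-1 : ℝ) 0, x t < 0

/-- A slowly oscillating periodic solution in 𝒳, with first zero `q` and data `qbar`:
positive on `(0,q)`, negative on `(q, q+qbar)`, periodic with minimal period `q+qbar`. -/
def SOPSX (α q qbar : ℝ) (x : ℝ → ℝ) : Prop :=
  InX x ∧ WrightSol α x ∧ 1 < q ∧ 1 < qbar ∧
  (∀ t ∈ Set.Ioo 0 q, 0 < x t) ∧
  (∀ t ∈ Set.Ioo q (q + qbar), x t < 0) ∧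
  Function.Periodic x (q + qbar) ∧
  (∀ T : ℝ, 0 < T → Function.Periodic x T → q + qbar ≤ T)

/-- A slowly oscillating periodic solution (up to time translation). -/
def SOPS (α : ℝ) (x : ℝ → ℝ) : Prop :=
  WrightSol α x ∧
  ∃ q qbar : ℝ, 1 < q ∧ 1 < qbar ∧
    (∃ τ : ℝ, (∀ t ∈ Set.Ioo 0 q, 0 < x (t + τ)) ∧
      (∀ t ∈ Set.Ioo q (q + qbar), x (t + τ) < 0)) ∧
    Function.Periodic x (q + qbar) ∧
    (∀ T : ℝ, 0 < T → Function.Periodic x T → q + qbar ≤ T)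

/-- Mean value inequality: if the derivative is `≤ c` on `(a,b)`, then
`x b - x a ≤ c * (b - a)`. -/
lemma key_slope_le {x f : ℝ → ℝ} (hd : ∀ t, HasDerivAt x (f t) t)
    {a b c : ℝ} (hab : a ≤ b) (hc : ∀ t ∈ Set.Ioo a b, f t ≤ c) :
    x b - x a ≤ c * (b - a) := by
  set g : ℝ → ℝ := fun t => c * t - x t with hg
  have hdg : ∀ t, HasDerivAt g (c - f t) t := fun t => by
    exact (by simpa using ((hasDerivAt_id t).const_mul c).sub (hd t) :
      HasDerivAt ((fun y => c * y) - x) (c - f t) t)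
  have hmono : MonotoneOn g (Set.Icc a b) := by
    apply monotoneOn_of_deriv_nonneg (convex_Icc a b)
    · exact fun t _ => (hdg t).continuousAt.continuousWithinAt
    · intro t ht
      exact (hdg t).differentiableAt.differentiableWithinAt
    · intro t ht
      rw [interior_Icc] at ht
      rw [(hdg t).deriv]
      linarith [hc t ht]
  have h := hmono (Set.left_mem_Icc.2 hab) (Set.right_mem_Icc.2 hab) hab
  simp only [hg] at h
  nlinarith [h]

/-- Mean value inequality: if the derivative is `≥ c` on `(a,b)`, then
`c * (b - a) ≤ x b - x a`. -/
lemma key_slope_ge {x f : ℝ → ℝ} (hd : ∀ t, HasDerivAt x (f t) t)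
    {a b c : ℝ} (hab : a ≤ b) (hc : ∀ t ∈ Set.Ioo a b, c ≤ f t) :
    c * (b - a) ≤ x b - x a := by
  have hd' : ∀ t, HasDerivAt (fun s => -x s) (-f t) t := fun t => (hd t).neg
  have := key_slope_le hd' hab (c := -c) (fun t ht => by linarith [hc t ht])
  nlinarith [this]

lemma wright_upper (α : ℝ) (hα : 0 < α) (x : ℝ → ℝ)
    (hX : InX x) (hW : WrightSol α x) :
    ∀ t : ℝ, 0 < t → x t ≤ α := by
  obtain ⟨-, hx0, -, -⟩ := hX
  have hcont : Continuous x := continuous_iff_continuousAt.2 fun t => (hW t).continuousAt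
  intro t0 ht0
  by_contra hgt
  push_neg at hgt
  set S : Set ℝ := Set.Icc 0 t0 ∩ x ⁻¹' Set.Iic 0 with hS
  have hS0 : (0 : ℝ) ∈ S := ⟨⟨le_refl 0, le_of_lt ht0⟩, by simp [hx0]⟩
  have hSc : IsClosed S := isClosed_Icc.inter (isClosed_Iic.preimage hcont)
  have hSbdd : BddAbove S := (bddAbove_Icc (a := (0:ℝ)) (b := t0)).mono
    (Set.inter_subset_left)
  set z : ℝ := sSup S with hzdef
  have hzS : z ∈ S := hSc.csSup_mem ⟨0, hS0⟩ hSbdd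
  obtain ⟨⟨hz0, hzt0⟩, hxz⟩ := hzS
  have hxz : x z ≤ 0 := hxz
  have hpos : ∀ t, z < t → t ≤ t0 → 0 < x t := by
    intro t hzt htt0
    by_contra hle
    push_neg at hle
    have : t ∈ S := ⟨⟨le_trans hz0 (le_of_lt hzt), htt0⟩, hle⟩
    exact absurd (le_csSup hSbdd this) (not_le.2 hzt)
  have hzlt : z < t0 := by
    rcases lt_or_eq_of_le hzt0 with h | h
    · exact h
    · exfalso; rw [h] at hxz; linarith
  have hub : ∀ t : ℝ, -α * (Real.exp (x (t - 1)) - 1) ≤ α := fun t => by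
    nlinarith [Real.exp_pos (x (t - 1))]
  rcases le_or_gt t0 (z + 1) with h1 | h1
  · have := key_slope_le hW (le_of_lt hzlt) (fun t _ => hub t)
    nlinarith
  · have hst1 : x (z + 1) - x z ≤ α * (z + 1 - z) :=
      key_slope_le hW (by linarith) (fun t _ => hub t)
    have hxz1 : x (z + 1) ≤ α := by nlinarith
    have hst2 : x t0 - x (z + 1) ≤ 0 * (t0 - (z + 1)) := by
      apply key_slope_le hW (le_of_lt h1)
      intro t ht
      have h1 : 0 < x (t - 1) := hpos (t - 1) (by linarith [ht.1]) (by linarith [ht.2])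
      nlinarith [Real.add_one_le_exp (x (t - 1))]
    nlinarith

theorem wright_global_extrema (α : ℝ) (hα : 0 < α) (x : ℝ → ℝ)
    (hX : InX x) (hW : WrightSol α x) :
    ∀ t : ℝ, 0 < t → -α * (Real.exp α - 1) ≤ x t ∧ x t ≤ α := by
  have hupper := wright_upper α hα x hX hW
  obtain ⟨-, hx0, -, hneg⟩ := hX
  have hcont : Continuous x := continuous_iff_continuousAt.2 fun t => (hW t).continuousAt
  -- `x s ≤ α` for all `s > -1`
  have hle : ∀ s : ℝ, -1 < s → x s ≤ α := by
    intro s hs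
    rcases lt_trichotomy s 0 with h | h | h
    · exact le_of_lt (lt_of_lt_of_le (hneg s ⟨hs, h⟩) (le_of_lt hα))
    · rw [h, hx0]; exact le_of_lt hα
    · exact hupper s h
  intro t0 ht0
  refine ⟨?_, hupper t0 ht0⟩
  by_contra hlt
  push_neg at hlt
  set S : Set ℝ := Set.Icc 0 t0 ∩ x ⁻¹' Set.Ici 0 with hS
  have hS0 : (0 : ℝ) ∈ S := ⟨⟨le_refl 0, le_of_lt ht0⟩, by simp [hx0]⟩
  have hSc : IsClosed S := isClosed_Icc.inter (isClosed_Ici.preimage hcont)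
  have hSbdd : BddAbove S := (bddAbove_Icc (a := (0:ℝ)) (b := t0)).mono
    (Set.inter_subset_left)
  set z : ℝ := sSup S with hzdef
  have hzS : z ∈ S := hSc.csSup_mem ⟨0, hS0⟩ hSbdd
  obtain ⟨⟨hz0, hzt0⟩, hxz⟩ := hzS
  have hxz : 0 ≤ x z := hxz
  have hnegt : ∀ t, z < t → t ≤ t0 → x t < 0 := by
    intro t hzt htt0
    by_contra hge
    push_neg at hge
    have : t ∈ S := ⟨⟨le_trans hz0 (le_of_lt hzt), htt0⟩, hge⟩
    exact absurd (le_csSup hSbdd this) (not_le.2 hzt)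
  have hzlt : z < t0 := by
    rcases lt_or_eq_of_le hzt0 with h | h
    · exact h
    · exfalso
      rw [h] at hxz
      have : x t0 < 0 := by nlinarith [Real.add_one_le_exp α]
      linarith
  -- derivative lower bound on `(z, z+1)`
  have hlb : ∀ t ∈ Set.Ioo z (z + 1),
      -α * (Real.exp α - 1) ≤ -α * (Real.exp (x (t - 1)) - 1) := by
    intro t ht
    have hxle : x (t - 1) ≤ α := hle (t - 1) (by linarith [ht.1])
    have := Real.exp_le_exp.2 hxle
    nlinarith
  rcases le_or_gt t0 (z + 1) with h1 | h1
  · have h := key_slope_ge hW (le_of_lt hzlt)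
      (fun t ht => hlb t ⟨ht.1, lt_of_lt_of_le ht.2 h1⟩)
    have hm : 0 ≤ α * (Real.exp α - 1) := by nlinarith [Real.add_one_le_exp α]
    nlinarith [mul_nonneg hm (show (0:ℝ) ≤ 1 - (t0 - z) by linarith)]
  · have hst1 : -α * (Real.exp α - 1) * (z + 1 - z) ≤ x (z + 1) - x z :=
      key_slope_ge hW (by linarith) hlb
    have hst2 : 0 * (t0 - (z + 1)) ≤ x t0 - x (z + 1) := by
      apply key_slope_ge hW (le_of_lt h1)
      intro t ht
      have h1 : x (t - 1) < 0 := hnegt (t - 1) (by linarith [ht.1]) (by linarith [ht.2])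
      have h2 := Real.exp_lt_exp.2 h1
      rw [Real.exp_zero] at h2
      nlinarith
    nlinarith
end
end

section
/- Let α > e^{-1} and let x ∈ 𝒳 be a solution of Wright's equation x'(t) = -α(e^{x(t-1)} - 1). Define functions p_i : (-∞,1] → ℝ recursively by p_1(t) = αt and p_{i+1}(t) = -α ∫_0^t (e^{p_i(s-1)} - 1) ds. Then for every i ≥ 1: x(t) > p_i(t) for all t < 0; x(t) < p_i(t) for all t ∈ (0,1]; and x(t) < p_i(1) for all t ≥ 0. Moreover, for each fixed i and t, the quantity |p_i(t)| is monotone increasing as a function of α. -/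
open Real Set Filter

noncomputable section

/-- Jones' iterative upper bounds: `pJones α i` corresponds to `p_{i+1}` in the paper,
so that `pJones α 0 = p_1 = α t` and
`pJones α (i+1) t = p_{i+2}(t) = -α ∫_0^t (e^{p_{i+1}(s-1)} - 1) ds`. -/
noncomputable def pJones (α : ℝ) : ℕ → ℝ → ℝ
  | 0 => fun t => α * t
  | (i + 1) => fun t => -α * ∫ s in (0 : ℝ)..t, (Real.exp (pJones α i (s - 1)) - 1)




lemma jones_prim_hasDerivAt {f : ℝ → ℝ} (hf : Continuous f) (t : ℝ) :
    HasDerivAt (fun u => ∫ s in (0:ℝ)..u, f s) (f t) t :=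
  intervalIntegral.integral_hasDerivAt_right (hf.intervalIntegrable 0 t)
    (hf.stronglyMeasurableAtFilter _ _) hf.continuousAt

lemma pJones_cont (α : ℝ) : ∀ i, Continuous (pJones α i)
  | 0 => by
      show Continuous fun t => α * t
      exact continuous_const.mul continuous_id
  | (i+1) => by
      have hg : Continuous (fun s => Real.exp (pJones α i (s-1)) - 1) :=
        (Real.continuous_exp.comp ((pJones_cont α i).comp
          (continuous_id.sub continuous_const))).sub continuous_const
      have h2 : Continuous (fun t => ∫ s in (0:ℝ)..t, (Real.exp (pJones α i (s-1)) - 1)) :=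
        continuous_iff_continuousAt.2 fun t => (jones_prim_hasDerivAt hg t).continuousAt
      show Continuous fun t => -α * ∫ s in (0:ℝ)..t, (Real.exp (pJones α i (s-1)) - 1)
      exact continuous_const.mul h2

noncomputable def pd (α : ℝ) (i : ℕ) (v : ℝ) : ℝ := -α * (Real.exp (pJones α i (v-1)) - 1)

lemma pd_cont (α : ℝ) (i : ℕ) : Continuous (pd α i) :=
  continuous_const.mul ((Real.continuous_exp.comp ((pJones_cont α i).comp
    (continuous_id.sub continuous_const))).sub continuous_const)

lemma prep (α : ℝ) (i : ℕ) (t : ℝ) :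
    pJones α (i+1) t = ∫ v in (0:ℝ)..t, pd α i v := by
  show -α * (∫ s in (0:ℝ)..t, (Real.exp (pJones α i (s-1)) - 1)) = _
  rw [← intervalIntegral.integral_const_mul]
  rfl

lemma pJones_zero (α : ℝ) (i : ℕ) : pJones α i 0 = 0 := by
  cases i <;> simp [pJones]

lemma int_lt {f g : ℝ → ℝ} (hf : Continuous f) (hg : Continuous g) {a b : ℝ} (hab : a < b)
    (h : ∀ v ∈ Ioo a b, f v < g v) : (∫ v in a..b, f v) < ∫ v in a..b, g v := by
  have h0 : 0 < ∫ v in a..b, (g v - f v) :=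
    intervalIntegral.intervalIntegral_pos_of_pos_on ((hg.sub hf).intervalIntegrable a b)
      (fun v hv => sub_pos.2 (h v hv)) hab
  rw [intervalIntegral.integral_sub (hg.intervalIntegrable a b) (hf.intervalIntegrable a b)] at h0
  linarith


lemma wright_cont {α : ℝ} {x : ℝ → ℝ} (hW : WrightSol α x) : Continuous x :=
  continuous_iff_continuousAt.2 fun t => (hW t).continuousAt

lemma jones_shift (α : ℝ) (hα0 : 0 < α) (x : ℝ → ℝ) (hW : WrightSol α x)
    (z : ℝ) (hz : x z = 0) :
    ∀ i : ℕ, (∀ u < (0:ℝ), pJones α i u < x (z+u)) ∧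
      (∀ u ∈ Ioc (0:ℝ) 1, x (z+u) < pJones α i u) := by
  have hcx : Continuous x := wright_cont hW
  set xd : ℝ → ℝ := fun w => -α * (Real.exp (x (w-1)) - 1) with hxd
  have hcxd : Continuous (fun v => xd (z+v)) := by
    apply continuous_const.mul
    exact (Real.continuous_exp.comp (hcx.comp ((continuous_const.add continuous_id).sub
      continuous_const))).sub continuous_const
  have hrep : ∀ u : ℝ, x (z+u) = ∫ v in (0:ℝ)..u, xd (z+v) := by
    intro u
    have hderiv : ∀ v ∈ uIcc (0:ℝ) u, HasDerivAt (fun w => x (z+w)) (xd (z+v)) v := by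
      intro v _
      have h1 : HasDerivAt (fun w : ℝ => z + w) 1 v := (hasDerivAt_id v).const_add z
      have h2 := (hW (z+v)).comp v h1
      have he : (-α * (Real.exp (x (z + v - 1)) - 1)) * 1 = xd (z+v) := by
        simp only [hxd]; ring
      rw [he] at h2
      exact h2
    have hint : IntervalIntegrable (fun v => xd (z+v)) MeasureTheory.volume 0 u :=
      hcxd.intervalIntegrable _ _
    have h3 := intervalIntegral.integral_eq_sub_of_hasDerivAt hderiv hint
    rw [h3]
    simp [hz]
  intro i
  induction i with
  | zero =>
    have hpt : ∀ v : ℝ, xd v < α := by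
      intro v
      have h := Real.exp_pos (x (v-1))
      simp only [hxd]
      nlinarith
    constructor
    · intro u hu
      have h1 : (∫ v in u..(0:ℝ), xd (z+v)) < ∫ v in u..(0:ℝ), (α:ℝ) :=
        int_lt hcxd continuous_const hu (fun v _ => hpt (z+v))
      have h2 : (∫ _v in u..(0:ℝ), (α:ℝ)) = -(α * u) := by
        rw [intervalIntegral.integral_const]
        simp [smul_eq_mul]; ring
      have h3 : x (z+u) = -∫ v in u..(0:ℝ), xd (z+v) := by
        rw [hrep u, intervalIntegral.integral_symm]
      show α * u < x (z + u)
      rw [h3]; rw [h2] at h1; linarith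
    · rintro u ⟨hu0, _⟩
      have h1 : (∫ v in (0:ℝ)..u, xd (z+v)) < ∫ v in (0:ℝ)..u, (α:ℝ) :=
        int_lt hcxd continuous_const hu0 (fun v _ => hpt (z+v))
      have h2 : (∫ _v in (0:ℝ)..u, (α:ℝ)) = α * u := by
        rw [intervalIntegral.integral_const]
        simp [smul_eq_mul]; ring
      show x (z + u) < α * u
      rw [hrep u]; rw [h2] at h1; linarith
  | succ i ih =>
    obtain ⟨ih1, ih2⟩ := ih
    have hptw : ∀ v : ℝ, v - 1 < 0 → xd (z+v) < pd α i v := by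
      intro v hv
      have h1 : pJones α i (v-1) < x (z+(v-1)) := ih1 (v-1) hv
      rw [show z + (v-1) = z + v - 1 by ring] at h1
      have h3 := Real.exp_lt_exp.2 h1
      have h4 := mul_lt_mul_of_pos_left h3 hα0
      simp only [hxd, pd]
      linarith
    constructor
    · intro u hu
      have hlt : (∫ v in u..(0:ℝ), xd (z+v)) < ∫ v in u..(0:ℝ), pd α i v :=
        int_lt hcxd (pd_cont α i) hu (fun v hv => hptw v (by linarith [hv.2]))
      have h3 : x (z+u) = -∫ v in u..(0:ℝ), xd (z+v) := by
        rw [hrep u, intervalIntegral.integral_symm]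
      have h4 : pJones α (i+1) u = -∫ v in u..(0:ℝ), pd α i v := by
        rw [prep, intervalIntegral.integral_symm]
      rw [h3, h4]; linarith
    · rintro u ⟨hu0, hu1⟩
      have hlt : (∫ v in (0:ℝ)..u, xd (z+v)) < ∫ v in (0:ℝ)..u, pd α i v :=
        int_lt hcxd (pd_cont α i) hu0 (fun v hv => hptw v (by
          obtain ⟨_, hv2⟩ := hv; linarith))
      rw [prep, hrep u]; exact hlt

lemma pJones_neg (α : ℝ) (hα0 : 0 < α) : ∀ i : ℕ, ∀ t < (0:ℝ), pJones α i t < 0 := by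
  intro i
  induction i with
  | zero => intro t ht; exact mul_neg_of_pos_of_neg hα0 ht
  | succ i ih =>
    intro t ht
    have hpos : 0 < ∫ v in t..(0:ℝ), pd α i v := by
      apply intervalIntegral.intervalIntegral_pos_of_pos_on
        ((pd_cont α i).intervalIntegrable _ _) _ ht
      intro v hv
      have h1 := ih (v-1) (by linarith [hv.2])
      have hE : Real.exp (pJones α i (v-1)) < 1 := Real.exp_lt_one_iff.2 h1
      simp only [pd]; nlinarith
    have h2 : pJones α (i+1) t = -∫ v in t..(0:ℝ), pd α i v := by
      rw [prep, intervalIntegral.integral_symm]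
    rw [h2]; linarith

lemma pJones_nonpos (α : ℝ) (hα0 : 0 < α) (i : ℕ) : ∀ t ≤ (0:ℝ), pJones α i t ≤ 0 := by
  intro t ht
  rcases ht.lt_or_eq with h | h
  · exact (pJones_neg α hα0 i t h).le
  · rw [h, pJones_zero]

lemma pJones_pos (α : ℝ) (hα0 : 0 < α) : ∀ i : ℕ, ∀ t ∈ Ioc (0:ℝ) 1, 0 < pJones α i t := by
  intro i
  induction i with
  | zero => rintro t ⟨ht, _⟩; exact mul_pos hα0 ht
  | succ i _ =>
    rintro t ⟨ht0, ht1⟩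
    have hpos : 0 < ∫ v in (0:ℝ)..t, pd α i v := by
      apply intervalIntegral.intervalIntegral_pos_of_pos_on
        ((pd_cont α i).intervalIntegrable _ _) _ ht0
      intro v hv
      have h1 := pJones_neg α hα0 i (v-1) (by obtain ⟨_, h2⟩ := hv; linarith)
      have hE : Real.exp (pJones α i (v-1)) < 1 := Real.exp_lt_one_iff.2 h1
      simp only [pd]; nlinarith
    rw [prep]; exact hpos

lemma pd_nonneg (α : ℝ) (hα0 : 0 < α) (i : ℕ) {v : ℝ} (hv : v ≤ 1) : 0 ≤ pd α i v := by
  have h1 : pJones α i (v-1) ≤ 0 := pJones_nonpos α hα0 i _ (by linarith)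
  have hE : Real.exp (pJones α i (v-1)) ≤ 1 := Real.exp_le_one_iff.2 h1
  simp only [pd]; nlinarith

lemma pJones_le_one (α : ℝ) (hα0 : 0 < α) (i : ℕ) :
    ∀ u ∈ Ioc (0:ℝ) 1, pJones α i u ≤ pJones α i 1 := by
  rintro u ⟨hu0, hu1⟩
  cases i with
  | zero =>
    show α * u ≤ α * 1
    exact mul_le_mul_of_nonneg_left hu1 hα0.le
  | succ i =>
    rw [prep, prep]
    have hadd : (∫ v in (0:ℝ)..u, pd α i v) + ∫ v in u..(1:ℝ), pd α i v
        = ∫ v in (0:ℝ)..(1:ℝ), pd α i v :=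
      intervalIntegral.integral_add_adjacent_intervals
        ((pd_cont α i).intervalIntegrable 0 u) ((pd_cont α i).intervalIntegrable u 1)
    have h2 : 0 ≤ ∫ v in u..(1:ℝ), pd α i v :=
      intervalIntegral.integral_nonneg (μ := MeasureTheory.volume) hu1 (fun v hv => pd_nonneg α hα0 i hv.2)
    linarith

lemma pJones_mono (α α' : ℝ) (hα0 : 0 < α) (hle : α ≤ α') :
    ∀ i : ℕ, (∀ t ≤ (0:ℝ), pJones α' i t ≤ pJones α i t) ∧
      (∀ t ∈ Icc (0:ℝ) 1, pJones α i t ≤ pJones α' i t) := by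
  have hα'0 : 0 < α' := lt_of_lt_of_le hα0 hle
  intro i
  induction i with
  | zero =>
    constructor
    · intro t ht; exact mul_le_mul_of_nonpos_right hle ht
    · rintro t ⟨ht0, _⟩; exact mul_le_mul_of_nonneg_right hle ht0
  | succ i ih =>
    obtain ⟨ih1, ih2⟩ := ih
    have hptw : ∀ v ≤ (1:ℝ), pd α i v ≤ pd α' i v := by
      intro v hv
      have h1 : pJones α' i (v-1) ≤ pJones α i (v-1) := ih1 _ (by linarith)
      have h2 : pJones α i (v-1) ≤ 0 := pJones_nonpos α hα0 i _ (by linarith)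
      have e1 : Real.exp (pJones α i (v-1)) ≤ 1 := Real.exp_le_one_iff.2 h2
      have e2 : Real.exp (pJones α' i (v-1)) ≤ Real.exp (pJones α i (v-1)) :=
        Real.exp_le_exp.2 h1
      simp only [pd]
      nlinarith [mul_nonneg (sub_nonneg.2 hle) (sub_nonneg.2 e1),
        mul_nonneg hα'0.le (sub_nonneg.2 e2)]
    constructor
    · intro t ht
      rcases ht.lt_or_eq with h | h
      · have hmono : (∫ v in t..(0:ℝ), pd α i v) ≤ ∫ v in t..(0:ℝ), pd α' i v :=
          intervalIntegral.integral_mono_on h.le ((pd_cont α i).intervalIntegrable _ _)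
            ((pd_cont α' i).intervalIntegrable _ _)
            (fun v hv => hptw v (by linarith [hv.2]))
        have e3 : pJones α (i+1) t = -∫ v in t..(0:ℝ), pd α i v := by
          rw [prep, intervalIntegral.integral_symm]
        have e4 : pJones α' (i+1) t = -∫ v in t..(0:ℝ), pd α' i v := by
          rw [prep, intervalIntegral.integral_symm]
        rw [e3, e4]; linarith
      · rw [h, pJones_zero, pJones_zero]
    · rintro t ⟨ht0, ht1⟩
      rw [prep, prep]
      exact intervalIntegral.integral_mono_on ht0 ((pd_cont α i).intervalIntegrable _ _)
        ((pd_cont α' i).intervalIntegrable _ _) (fun v hv => hptw v (le_trans hv.2 ht1))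

lemma jones_sup (α : ℝ) (hα0 : 0 < α) (x : ℝ → ℝ) (hW : WrightSol α x) (hx0 : x 0 = 0)
    (i : ℕ) : ∀ t : ℝ, 0 ≤ t → x t < pJones α i 1 := by
  have hcx : Continuous x := wright_cont hW
  intro t ht
  by_contra hcon
  push_neg at hcon
  set c := pJones α i 1 with hc
  have hcpos : 0 < c := pJones_pos α hα0 i 1 ⟨one_pos, le_refl 1⟩
  set S : Set ℝ := Icc 0 t ∩ x ⁻¹' (Ici c) with hS
  have hSc : IsClosed S := isClosed_Icc.inter (isClosed_Ici.preimage hcx)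
  have hSne : S.Nonempty := ⟨t, ⟨⟨ht, le_refl t⟩, hcon⟩⟩
  have hSbdd : BddBelow S := ⟨0, fun s hs => hs.1.1⟩
  set T := sInf S with hT
  have hTS : T ∈ S := hSc.csInf_mem hSne hSbdd
  have hT0 : 0 ≤ T := hTS.1.1
  have hcT : c ≤ x T := hTS.2
  have hTpos : 0 < T := by
    rcases hT0.lt_or_eq with h | h
    · exact h
    · exfalso; rw [← h, hx0] at hcT; linarith
  have hmin : ∀ s, 0 ≤ s → s < T → x s < c := by
    intro s hs0 hsT
    by_contra hs
    push_neg at hs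
    have hmem : s ∈ S := ⟨⟨hs0, le_trans hsT.le hTS.1.2⟩, hs⟩
    exact absurd (csInf_le hSbdd hmem) (not_le.2 hsT)
  have hd := hW T
  have hd0 : 0 ≤ -α * (Real.exp (x (T-1)) - 1) := by
    by_contra hdneg
    push_neg at hdneg
    have hslope := hasDerivAt_iff_tendsto_slope.1 hd
    have ev1 : ∀ᶠ s in nhdsWithin T {T}ᶜ, slope x T s < 0 :=
      hslope.eventually_lt_const hdneg
    have hmono : nhdsWithin T (Iio T) ≤ nhdsWithin T {T}ᶜ :=
      nhdsWithin_mono T (fun s hs => ne_of_lt hs)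
    have ev1' : ∀ᶠ s in nhdsWithin T (Iio T), slope x T s < 0 := ev1.filter_mono hmono
    have ev2 : ∀ᶠ s in nhdsWithin T (Iio T), 0 < s :=
      (eventually_gt_nhds hTpos).filter_mono nhdsWithin_le_nhds
    have ev3 : ∀ᶠ s in nhdsWithin T (Iio T), s < T := eventually_mem_nhdsWithin
    obtain ⟨s, hs1, hs2, hs3⟩ := (ev1'.and (ev2.and ev3)).exists
    have hxs : x s < c := hmin s hs2.le hs3
    have hpos : 0 < x s - x T := by
      have h2 : x s - x T = slope x T s * (s - T) := by
        rw [slope_def_field, div_mul_cancel₀ _ (sub_ne_zero.2 (ne_of_lt hs3))]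
      rw [h2]
      exact mul_pos_of_neg_of_neg hs1 (sub_neg.2 hs3)
    linarith
  have hxT1 : x (T-1) ≤ 0 := by
    have hE : Real.exp (x (T-1)) ≤ 1 := by nlinarith
    exact Real.exp_le_one_iff.1 hE
  have h0mem : (0:ℝ) ∈ Icc (x (T-1)) (x T) := ⟨hxT1, le_trans hcpos.le hcT⟩
  obtain ⟨z, hzmem, hz⟩ :=
    intermediate_value_Icc (by linarith : T - 1 ≤ T) hcx.continuousOn h0mem
  have hzT : z < T := by
    rcases hzmem.2.lt_or_eq with h | h
    · exact h
    · exfalso; rw [h] at hz; rw [hz] at hcT; linarith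
  have hu : T - z ∈ Ioc (0:ℝ) 1 := ⟨by linarith, by linarith [hzmem.1]⟩
  have hshift := (jones_shift α hα0 x hW z hz i).2 (T - z) hu
  rw [show z + (T - z) = T by ring] at hshift
  have hle := pJones_le_one α hα0 i (T-z) hu
  linarith

theorem jones_max (α : ℝ) (hα : Real.exp (-1) < α) (x : ℝ → ℝ)
    (hX : InX x) (hW : WrightSol α x) :
    (∀ i : ℕ,
      (∀ t : ℝ, t < 0 → pJones α i t < x t) ∧
      (∀ t ∈ Set.Ioc (0 : ℝ) 1, x t < pJones α i t) ∧
      (∀ t : ℝ, 0 ≤ t → x t < pJones α i 1)) ∧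
    (∀ i : ℕ, ∀ t : ℝ, t ≤ 1 → ∀ α' : ℝ, α ≤ α' →
      |pJones α i t| ≤ |pJones α' i t|) := by
  have hα0 : 0 < α := lt_trans (Real.exp_pos _) hα
  have hx0 : x 0 = 0 := hX.2.1
  constructor
  · intro i
    obtain ⟨h1, h2⟩ := jones_shift α hα0 x hW 0 hx0 i
    refine ⟨?_, ?_, jones_sup α hα0 x hW hx0 i⟩
    · intro t ht
      have := h1 t ht
      rwa [zero_add] at this
    · intro t ht
      have := h2 t ht
      rwa [zero_add] at this
  · intro i t ht α' hα'
    have hα'0 : 0 < α' := lt_of_lt_of_le hα0 hα'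
    obtain ⟨m1, m2⟩ := pJones_mono α α' hα0 hα' i
    rcases le_or_gt t 0 with h | h
    · have a1 := m1 t h
      have a2 := pJones_nonpos α hα0 i t h
      have a3 := pJones_nonpos α' hα'0 i t h
      rw [abs_of_nonpos a2, abs_of_nonpos a3]
      linarith
    · have a1 := m2 t ⟨h.le, ht⟩
      have a2 := (pJones_pos α hα0 i t ⟨h, ht⟩).le
      have a3 := (pJones_pos α' hα'0 i t ⟨h, ht⟩).le
      rw [abs_of_nonneg a2, abs_of_nonneg a3]
      exact a1
end
end

section
/- Fix α > 0 and let x ∈ 𝒳 be a slowly oscillating periodic solution of Wright's equation x'(t) = -α(e^{x(t-1)} - 1) with q = q(x) and q̄ = q̄(x) ≥ 2. Let ℓ, u : ℝ → ℝ be continuous functions with ℓ(t) ≤ x(t) ≤ u(t) for all t, and let I_q = [q_min, q_max] be a compact interval with q ∈ I_q. Define U⁺ = sup_{q' ∈ I_q} ∫_{q'-1}^{q'} max{e^{u(t)} - 1, 0} dt, L⁺ = inf_{q' ∈ I_q} ∫_{q'-1}^{q'} max{e^{ℓ(t)} - 1, 0} dt, U₁⁻ = sup_{q' ∈ I_q}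 ∫_{q'}^{q'+1} (-min{e^{ℓ(t)} - 1, 0}) dt, L₁⁻ = inf_{q' ∈ I_q} ∫_{q'}^{q'+1} (-min{e^{u(t)} - 1, 0}) dt, and m = min_{t ∈ I_q} ℓ(t+1). Assume u(-1) < 0 (and note m < 0 follows since m ≤ x(q+1) < 0). Then 2 + (L⁺ - U₁⁻)/|e^m - 1| ≤ q̄ ≤ 2 + (U⁺ - L₁⁻)/|e^{u(-1)} - 1|. -/
open Real Set Filter

noncomputable section

theorem period_bound (α q qbar qmin qmax : ℝ) (x ℓ u : ℝ → ℝ)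
    (Uplus Lplus Uminus₁ Lminus₁ m : ℝ)
    (hα : 0 < α) (hx : SOPSX α q qbar x) (hqbar : 2 ≤ qbar)
    (hℓ : Continuous ℓ) (hu : Continuous u)
    (hlx : ∀ t : ℝ, ℓ t ≤ x t) (hxu : ∀ t : ℝ, x t ≤ u t)
    (hqi : qmin ≤ qmax) (hq : q ∈ Set.Icc qmin qmax)
    (hUplus : Uplus = sSup ((fun q' => ∫ t in (q' - 1)..q', max (Real.exp (u t) - 1) 0) ''
      Set.Icc qmin qmax))
    (hLplus : Lplus = sInf ((fun q' => ∫ t in (q' - 1)..q', max (Real.exp (ℓ t) - 1) 0) ''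
      Set.Icc qmin qmax))
    (hUminus₁ : Uminus₁ = sSup ((fun q' => ∫ t in q'..(q' + 1), -(min (Real.exp (ℓ t) - 1) 0)) ''
      Set.Icc qmin qmax))
    (hLminus₁ : Lminus₁ = sInf ((fun q' => ∫ t in q'..(q' + 1), -(min (Real.exp (u t) - 1) 0)) ''
      Set.Icc qmin qmax))
    (hm : m = sInf ((fun t => ℓ (t + 1)) '' Set.Icc qmin qmax))
    (hu1 : u (-1) < 0) :
    2 + (Lplus - Uminus₁) / |Real.exp m - 1| ≤ qbar ∧
    qbar ≤ 2 + (Uplus - Lminus₁) / |Real.exp (u (-1)) - 1| := by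
  obtain ⟨⟨hC1x, hx00, -, -⟩, hW, hq1, hqb1, hpos, hneg, hper, -⟩ := hx
  have hcx : Continuous x := hC1x.continuous
  set g : ℝ → ℝ := fun s => Real.exp (x s) - 1 with hg
  have hcg : Continuous g := (Real.continuous_exp.comp hcx).sub continuous_const
  have hcd : Continuous (fun t : ℝ => -α * g (t - 1)) :=
    continuous_const.mul (hcg.comp (continuous_id.sub continuous_const))
  have hFTC : ∀ a b : ℝ, (∫ t in a..b, -α * g (t - 1)) = x b - x a := fun a b =>
    intervalIntegral.integral_eq_sub_of_hasDerivAt (fun t _ => hW t) (hcd.intervalIntegrable a b)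
  have hCoV : ∀ a b : ℝ, (∫ t in a..b, -α * g (t - 1)) = -α * ∫ s in (a-1)..(b-1), g s := by
    intro a b
    rw [intervalIntegral.integral_const_mul, intervalIntegral.integral_comp_sub_right g 1]
  -- zeros of x
  have hxq : x q = 0 := by
    have hle : x q ≤ 0 := by
      have ht : Filter.Tendsto x (nhdsWithin q (Set.Ioi q)) (nhds (x q)) :=
        (hcx.tendsto q).mono_left nhdsWithin_le_nhds
      refine le_of_tendsto ht ?_
      filter_upwards [Ioo_mem_nhdsGT_of_mem (⟨le_refl q, by linarith⟩ : q ∈ Set.Ico q (q + qbar))]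
        with t ht'
      exact (hneg t ht').le
    have hge : 0 ≤ x q := by
      have ht : Filter.Tendsto x (nhdsWithin q (Set.Iio q)) (nhds (x q)) :=
        (hcx.tendsto q).mono_left nhdsWithin_le_nhds
      refine ge_of_tendsto ht ?_
      filter_upwards [Ioo_mem_nhdsLT_of_mem (⟨by linarith, le_refl q⟩ : q ∈ Set.Ioc 0 q)]
        with t ht'
      exact (hpos t ht').le
    linarith
  have hxL : x (q + qbar) = 0 := by
    have := hper 0
    rw [zero_add] at this
    rw [this, hx00]
  -- sign of x on key intervals
  have hxle0 : ∀ s ∈ Set.Icc q (q + qbar), x s ≤ 0 := by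
    intro s hs
    rcases eq_or_lt_of_le hs.1 with h | h
    · rw [← h, hxq]
    rcases eq_or_lt_of_le hs.2 with h2 | h2
    · rw [h2, hxL]
    · exact (hneg s ⟨h, h2⟩).le
  have hxge0 : ∀ s ∈ Set.Icc (q-1) q, 0 ≤ x s := by
    intro s hs
    rcases eq_or_lt_of_le hs.2 with h | h
    · rw [h, hxq]
    · exact (hpos s ⟨by linarith [hs.1], h⟩).le
  -- x is nondecreasing on [q+1, q+qbar]
  have hmono : ∀ a b : ℝ, q + 1 ≤ a → a ≤ b → b ≤ q + qbar → x a ≤ x b := by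
    intro a b ha hab hb
    have h := hFTC a b
    have hnn : 0 ≤ ∫ t in a..b, -α * g (t - 1) := by
      refine intervalIntegral.integral_nonneg hab ?_
      intro t ht
      have hx0 : x (t - 1) ≤ 0 := hxle0 (t - 1) ⟨by linarith [ht.1], by linarith [ht.2]⟩
      have he : Real.exp (x (t - 1)) ≤ 1 := by
        calc Real.exp (x (t - 1)) ≤ Real.exp 0 := Real.exp_le_exp.mpr hx0
        _ = 1 := Real.exp_zero
      have : (0:ℝ) ≤ g (t - 1) * (-1) := by simp only [hg]; nlinarith
      nlinarith
    linarith [h ▸ hnn]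
  -- key values
  have hxq1_lt0 : x (q + 1) < 0 := hneg (q + 1) ⟨by linarith, by linarith⟩
  have hx_neg1 : x (q + qbar - 1) = x (-1) := by
    have := hper (-1)
    have h' : (-1 : ℝ) + (q + qbar) = q + qbar - 1 := by ring
    rw [h'] at this
    exact this
  -- integral identities
  set A : ℝ := ∫ s in (q-1)..q, g s with hA
  set B : ℝ := ∫ s in q..(q+qbar-1), g s with hB
  have e1 : x (q + 1) = -α * A := by
    have h := (hFTC q (q+1)).symm.trans (hCoV q (q+1))
    have h2 : q + 1 - 1 = q := by ring
    rw [h2, hxq, sub_zero] at h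
    exact h
  have e2 : -x (q + 1) = -α * B := by
    have h := (hFTC (q+1) (q+qbar)).symm.trans (hCoV (q+1) (q+qbar))
    have h2 : q + 1 - 1 = q := by ring
    rw [h2, hxL, zero_sub] at h
    exact h
  have hAB : A = -B := by
    have hαA : α * A = -x (q + 1) := by linarith [e1]
    have hαB : α * B = x (q + 1) := by linarith [e2]
    have h0 : α * (A + B) = 0 := by ring_nf; linarith [hαA, hαB]
    have := mul_eq_zero.mp h0
    rcases this with h | h
    · exact absurd h hα.ne'
    · linarith
  have hnegB : (∫ s in q..(q+qbar-1), (1 - Real.exp (x s))) = -B := by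
    have hcongr : ∀ s : ℝ, (1 : ℝ) - Real.exp (x s) = -(g s) := by
      intro s; simp only [hg]; ring
    simp_rw [hcongr]
    rw [intervalIntegral.integral_neg]
  have hcint : Continuous (fun s => (1:ℝ) - Real.exp (x s)) :=
    continuous_const.sub (Real.continuous_exp.comp hcx)
  have hsplit : (∫ s in q..(q+1), (1 - Real.exp (x s))) +
      (∫ s in (q+1)..(q+qbar-1), (1 - Real.exp (x s))) =
      ∫ s in q..(q+qbar-1), (1 - Real.exp (x s)) :=
    intervalIntegral.integral_add_adjacent_intervals
      (hcint.intervalIntegrable _ _) (hcint.intervalIntegrable _ _)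
  set C₁ : ℝ := ∫ s in q..(q+1), (1 - Real.exp (x s)) with hC₁
  set C₂ : ℝ := ∫ s in (q+1)..(q+qbar-1), (1 - Real.exp (x s)) with hC₂
  have hkey : A = C₁ + C₂ := by rw [hAB, ← hnegB, ← hsplit]
  -- m facts
  have hmbdd : BddBelow ((fun t => ℓ (t + 1)) '' Set.Icc qmin qmax) :=
    (isCompact_Icc.image (hℓ.comp (continuous_id.add continuous_const))).bddBelow
  have hm_le : m ≤ ℓ (q + 1) := by
    rw [hm]; exact csInf_le hmbdd ⟨q, hq, rfl⟩
  have hm0 : m < 0 := lt_of_le_of_lt (hm_le.trans (hlx (q+1))) hxq1_lt0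
  -- pointwise bounds on [q+1, q+qbar-1]
  have hlen : q + 1 ≤ q + qbar - 1 := by linarith
  have hpt2 : ∀ s ∈ Set.Icc (q+1) (q+qbar-1),
      1 - Real.exp (u (-1)) ≤ 1 - Real.exp (x s) ∧ 1 - Real.exp (x s) ≤ 1 - Real.exp m := by
    intro s hs
    constructor
    · have h1 : x s ≤ x (q + qbar - 1) := hmono s (q+qbar-1) hs.1 hs.2 (by linarith)
      have h2 : x s ≤ u (-1) := by
        rw [hx_neg1] at h1
        exact h1.trans (hxu (-1))
      have := Real.exp_le_exp.mpr h2
      linarith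
    · have h1 : x (q + 1) ≤ x s := hmono (q+1) s le_rfl hs.1 (by linarith [hs.2])
      have h2 : m ≤ x s := by linarith [hm_le, hlx (q+1)]
      have := Real.exp_le_exp.mpr h2
      linarith
  have hC2_ub : C₂ ≤ (qbar - 2) * (1 - Real.exp m) := by
    have h := intervalIntegral.integral_mono_on (μ := MeasureTheory.volume) hlen (hcint.intervalIntegrable _ _)
      (continuous_const.intervalIntegrable _ _) (fun s hs => (hpt2 s hs).2)
    rw [intervalIntegral.integral_const] at h
    have h2 : (q + qbar - 1 - (q + 1)) = qbar - 2 := by ring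
    rw [h2, smul_eq_mul] at h
    exact h
  have hC2_lb : (qbar - 2) * (1 - Real.exp (u (-1))) ≤ C₂ := by
    have h := intervalIntegral.integral_mono_on (μ := MeasureTheory.volume) hlen (continuous_const.intervalIntegrable _ _)
      (hcint.intervalIntegrable _ _) (fun s hs => (hpt2 s hs).1)
    rw [intervalIntegral.integral_const] at h
    have h2 : (q + qbar - 1 - (q + 1)) = qbar - 2 := by ring
    rw [h2, smul_eq_mul] at h
    exact h
  -- bounds on A
  have hcmaxl : Continuous (fun t => max (Real.exp (ℓ t) - 1) 0) :=
    ((Real.continuous_exp.comp hℓ).sub continuous_const).max continuous_const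
  have hcmaxu : Continuous (fun t => max (Real.exp (u t) - 1) 0) :=
    ((Real.continuous_exp.comp hu).sub continuous_const).max continuous_const
  have hcminl : Continuous (fun t => -(min (Real.exp (ℓ t) - 1) 0)) :=
    ((((Real.continuous_exp.comp hℓ).sub continuous_const).min continuous_const)).neg
  have hcminu : Continuous (fun t => -(min (Real.exp (u t) - 1) 0)) :=
    ((((Real.continuous_exp.comp hu).sub continuous_const).min continuous_const)).neg
  have hA_lb : (∫ t in (q-1)..q, max (Real.exp (ℓ t) - 1) 0) ≤ A := by
    refine intervalIntegral.integral_mono_on (by linarith) (hcmaxl.intervalIntegrable _ _)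
      (hcg.intervalIntegrable _ _) ?_
    intro t ht
    have h0 : 0 ≤ x t := hxge0 t ht
    have h1 : Real.exp (ℓ t) - 1 ≤ Real.exp (x t) - 1 := by
      have := Real.exp_le_exp.mpr (hlx t); linarith
    have h2 : (0:ℝ) ≤ Real.exp (x t) - 1 := by
      have := Real.exp_le_exp.mpr h0
      rw [Real.exp_zero] at this
      linarith
    exact max_le h1 h2
  have hA_ub : A ≤ ∫ t in (q-1)..q, max (Real.exp (u t) - 1) 0 := by
    refine intervalIntegral.integral_mono_on (by linarith) (hcg.intervalIntegrable _ _)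
      (hcmaxu.intervalIntegrable _ _) ?_
    intro t ht
    have h1 : Real.exp (x t) - 1 ≤ Real.exp (u t) - 1 := by
      have := Real.exp_le_exp.mpr (hxu t); linarith
    exact h1.trans (le_max_left _ _)
  -- bounds on C₁
  have hC1_ub : C₁ ≤ ∫ t in q..(q+1), -(min (Real.exp (ℓ t) - 1) 0) := by
    refine intervalIntegral.integral_mono_on (by linarith) (hcint.intervalIntegrable _ _)
      (hcminl.intervalIntegrable _ _) ?_
    intro t ht
    have hx0 : x t ≤ 0 := hxle0 t ⟨ht.1, by linarith [ht.2]⟩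
    have h1 : min (Real.exp (ℓ t) - 1) 0 ≤ Real.exp (x t) - 1 := by
      have := Real.exp_le_exp.mpr (hlx t)
      have := min_le_left (Real.exp (ℓ t) - 1) 0
      linarith
    linarith
  have hC1_lb : (∫ t in q..(q+1), -(min (Real.exp (u t) - 1) 0)) ≤ C₁ := by
    refine intervalIntegral.integral_mono_on (by linarith) (hcminu.intervalIntegrable _ _)
      (hcint.intervalIntegrable _ _) ?_
    intro t ht
    have hx0 : x t ≤ 0 := hxle0 t ⟨ht.1, by linarith [ht.2]⟩
    have hex : Real.exp (x t) ≤ 1 := by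
      have := Real.exp_le_exp.mpr hx0
      rwa [Real.exp_zero] at this
    have h1 : Real.exp (x t) - 1 ≤ min (Real.exp (u t) - 1) 0 := by
      refine le_min ?_ (by linarith)
      have := Real.exp_le_exp.mpr (hxu t); linarith
    linarith
  -- sSup / sInf comparisons
  have hLp : Lplus ≤ ∫ t in (q-1)..q, max (Real.exp (ℓ t) - 1) 0 := by
    rw [hLplus]
    refine csInf_le ⟨0, ?_⟩ ⟨q, hq, rfl⟩
    rintro y ⟨q', hq', rfl⟩
    exact intervalIntegral.integral_nonneg (by linarith) (fun t _ => le_max_right _ _)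
  have hLm : Lminus₁ ≤ ∫ t in q..(q+1), -(min (Real.exp (u t) - 1) 0) := by
    rw [hLminus₁]
    refine csInf_le ⟨0, ?_⟩ ⟨q, hq, rfl⟩
    rintro y ⟨q', hq', rfl⟩
    refine intervalIntegral.integral_nonneg (by linarith) (fun t _ => ?_)
    have := min_le_right (Real.exp (u t) - 1) 0
    linarith
  have hUp : (∫ t in (q-1)..q, max (Real.exp (u t) - 1) 0) ≤ Uplus := by
    rw [hUplus]
    obtain ⟨C, hC⟩ := (isCompact_Icc (a := qmin - 1) (b := qmax)).exists_bound_of_continuousOn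
      hcmaxu.continuousOn
    refine le_csSup ⟨C, ?_⟩ ⟨q, hq, rfl⟩
    rintro y ⟨q', hq', rfl⟩
    have hb := intervalIntegral.norm_integral_le_of_norm_le_const
      (C := C) (f := fun t => max (Real.exp (u t) - 1) 0) (a := q' - 1) (b := q') ?_
    · rw [Real.norm_eq_abs] at hb
      have h1 : |q' - (q' - 1)| = 1 := by rw [show q' - (q' - 1) = 1 by ring, abs_one]
      rw [h1, mul_one] at hb
      exact (le_abs_self _).trans hb
    · intro t ht
      rw [Set.uIoc_of_le (by linarith : q' - 1 ≤ q')] at ht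
      exact hC t ⟨by linarith [ht.1, hq'.1], ht.2.trans hq'.2⟩
  have hUm : (∫ t in q..(q+1), -(min (Real.exp (ℓ t) - 1) 0)) ≤ Uminus₁ := by
    rw [hUminus₁]
    obtain ⟨C, hC⟩ := (isCompact_Icc (a := qmin) (b := qmax + 1)).exists_bound_of_continuousOn
      hcminl.continuousOn
    refine le_csSup ⟨C, ?_⟩ ⟨q, hq, rfl⟩
    rintro y ⟨q', hq', rfl⟩
    have hb := intervalIntegral.norm_integral_le_of_norm_le_const
      (C := C) (f := fun t => -(min (Real.exp (ℓ t) - 1) 0)) (a := q') (b := q' + 1) ?_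
    · rw [Real.norm_eq_abs] at hb
      have h1 : |q' + 1 - q'| = 1 := by rw [show q' + 1 - q' = 1 by ring, abs_one]
      rw [h1, mul_one] at hb
      exact (le_abs_self _).trans hb
    · intro t ht
      rw [Set.uIoc_of_le (by linarith : q' ≤ q' + 1)] at ht
      exact hC t ⟨by linarith [ht.1, hq'.1], by linarith [ht.2, hq'.2]⟩
  -- final arithmetic
  have hD : 0 < 1 - Real.exp (u (-1)) := by
    have := Real.exp_lt_exp.mpr hu1
    rw [Real.exp_zero] at this
    linarith
  have hE : 0 < 1 - Real.exp m := by
    have := Real.exp_lt_exp.mpr hm0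
    rw [Real.exp_zero] at this
    linarith
  have habsm : |Real.exp m - 1| = 1 - Real.exp m := by
    rw [abs_of_neg (by linarith : Real.exp m - 1 < 0)]; ring
  have habsu : |Real.exp (u (-1)) - 1| = 1 - Real.exp (u (-1)) := by
    rw [abs_of_neg (by linarith : Real.exp (u (-1)) - 1 < 0)]; ring
  constructor
  · rw [habsm]
    have h1 : Lplus - Uminus₁ ≤ (qbar - 2) * (1 - Real.exp m) := by
      have : Lplus ≤ C₁ + C₂ := hLp.trans (hA_lb.trans_eq hkey)
      linarith [hC1_ub.trans hUm, hC2_ub]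
    have := (div_le_iff₀ hE).mpr h1
    linarith
  · rw [habsu]
    have h1 : (qbar - 2) * (1 - Real.exp (u (-1))) ≤ Uplus - Lminus₁ := by
      have : C₁ + C₂ ≤ Uplus := (hkey.symm.trans_le hA_ub).trans hUp
      linarith [hLm.trans hC1_lb, hC2_lb]
    have := (le_div_iff₀ hD).mpr h1
    linarith
end
end

section
/- Let α > 0 and let x ∈ 𝒳 be a slowly oscillating periodic solution of Wright's equation x'(t) = -α(e^{x(t-1)} - 1). Then the minimum of x satisfies min_{t ∈ ℝ} x(t) = x(q(x)+1) ≥ -α(e^{M} - 1), where M = max_{t ∈ ℝ} x(t). -/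
open Real Set Filter Topology

noncomputable section

theorem min_lower_bound (α q qbar : ℝ) (x : ℝ → ℝ) (hα : 0 < α)
    (hx : SOPSX α q qbar x) :
    (∀ t : ℝ, x (q + 1) ≤ x t) ∧
    -α * (Real.exp (sSup (Set.range x)) - 1) ≤ x (q + 1) := by
  obtain ⟨hX, hW, hq, hqb, hpos, hneg, hper, hmin⟩ := hx
  have hL0 : 0 < q + qbar := by linarith
  have hdiff : Differentiable ℝ x := fun t => (hW t).differentiableAt
  have hderiv : ∀ t, deriv x t = -α * (Real.exp (x (t - 1)) - 1) := fun t => (hW t).deriv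
  have hcont : Continuous x := hdiff.continuous
  -- x q = 0
  have hxq_ge : 0 ≤ x q := by
    have htend : Tendsto x (𝓝[Ioo 0 q] q) (𝓝 (x q)) :=
      (hcont.continuousAt).continuousWithinAt.tendsto
    have hne : (𝓝[Ioo 0 q] q).NeBot := by
      refine mem_closure_iff_nhdsWithin_neBot.mp ?_
      rw [closure_Ioo (by linarith : (0:ℝ) ≠ q)]
      exact ⟨by linarith, le_refl q⟩
    exact ge_of_tendsto htend (eventually_nhdsWithin_of_forall fun t ht => (hpos t ht).le)
  have hxq_le : x q ≤ 0 := by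
    have htend : Tendsto x (𝓝[Ioo q (q + qbar)] q) (𝓝 (x q)) :=
      (hcont.continuousAt).continuousWithinAt.tendsto
    have hne : (𝓝[Ioo q (q + qbar)] q).NeBot := by
      refine mem_closure_iff_nhdsWithin_neBot.mp ?_
      rw [closure_Ioo (by linarith : q ≠ q + qbar)]
      exact ⟨le_refl q, by linarith⟩
    exact le_of_tendsto htend (eventually_nhdsWithin_of_forall fun t ht => (hneg t ht).le)
  have hxq : x q = 0 := le_antisymm hxq_le hxq_ge
  -- x is antitone on [q, q+1]
  have hanti : AntitoneOn x (Icc q (q + 1)) := by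
    refine antitoneOn_of_deriv_nonpos (convex_Icc _ _) hcont.continuousOn
      hdiff.differentiableOn ?_
    intro t ht
    rw [interior_Icc] at ht
    rw [hderiv]
    have h1 : 0 < x (t - 1) := hpos _ ⟨by linarith [ht.1], by linarith [ht.2]⟩
    have h2 : 1 < Real.exp (x (t - 1)) := by
      calc (1:ℝ) = Real.exp 0 := (Real.exp_zero).symm
        _ < _ := Real.exp_lt_exp.mpr h1
    nlinarith
  -- x is monotone on [q+1, q+qbar+1]
  have hmono : MonotoneOn x (Icc (q + 1) (q + qbar + 1)) := by
    refine monotoneOn_of_deriv_nonneg (convex_Icc _ _) hcont.continuousOn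
      hdiff.differentiableOn ?_
    intro t ht
    rw [interior_Icc] at ht
    rw [hderiv]
    have h1 : x (t - 1) < 0 := hneg _ ⟨by linarith [ht.1], by linarith [ht.2]⟩
    have h2 : Real.exp (x (t - 1)) < 1 := by
      calc Real.exp (x (t - 1)) < Real.exp 0 := Real.exp_lt_exp.mpr h1
        _ = 1 := Real.exp_zero
    nlinarith
  have hq1_le_xq : x (q + 1) ≤ x q :=
    hanti ⟨le_refl q, by linarith⟩ ⟨by linarith, le_refl _⟩ (by linarith)
  have key : ∀ s ∈ Icc q (q + (q + qbar)), x (q + 1) ≤ x s := by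
    intro s hs
    rcases le_or_gt s (q + 1) with h1 | h1
    · exact hanti ⟨hs.1, h1⟩ ⟨by linarith, le_refl _⟩ h1
    rcases le_or_gt s (q + qbar + 1) with h2 | h2
    · exact le_trans (le_refl _) (hmono ⟨le_refl _, by linarith⟩ ⟨h1.le, h2⟩ h1.le)
    · -- s ∈ (q+qbar+1, q + (q+qbar)], so s - (q+qbar) ∈ (1, q]
      have hs' : x (s - (q + qbar)) = x s := hper.sub_eq s
      have hge : 0 ≤ x (s - (q + qbar)) := by
        rcases eq_or_lt_of_le (by linarith [hs.2] : s - (q + qbar) ≤ q) with h3 | h3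
        · rw [h3, hxq]
        · exact (hpos _ ⟨by linarith, h3⟩).le
      calc x (q + 1) ≤ x q := hq1_le_xq
        _ = 0 := hxq
        _ ≤ x (s - (q + qbar)) := hge
        _ = x s := hs'
  have hmin' : ∀ t : ℝ, x (q + 1) ≤ x t := by
    intro t
    obtain ⟨s, hs, heq⟩ := hper.exists_mem_Ico hL0 t q
    rw [heq]
    exact key s ⟨hs.1, hs.2.le⟩
  refine ⟨hmin', ?_⟩
  -- Lower bound: range x is bounded above
  have hbdd : BddAbove (range x) := by
    have hcomp : IsCompact (x '' (Icc 0 (q + qbar))) := isCompact_Icc.image hcont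
    have hsub : range x ⊆ x '' (Icc 0 (q + qbar)) := by
      rintro _ ⟨t, rfl⟩
      obtain ⟨s, hs, heq⟩ := hper.exists_mem_Ico₀ hL0 t
      exact ⟨s, ⟨hs.1, hs.2.le⟩, heq.symm⟩
    exact BddAbove.mono hsub hcomp.bddAbove
  set M := sSup (range x) with hM
  have hle : ∀ t, x t ≤ M := fun t => le_csSup hbdd ⟨t, rfl⟩
  set c : ℝ := -α * (Real.exp M - 1) with hc
  have hg : Monotone (fun t => x t - c * t) := by
    have hgd : ∀ t : ℝ, HasDerivAt (fun t => x t - c * t)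
        (-α * (Real.exp (x (t - 1)) - 1) - c) t := by
      intro t
      have h := ((hasDerivAt_id t).const_mul c)
      have h2 := (hW t).sub h
      rw [mul_one] at h2
      exact h2
    refine monotone_of_deriv_nonneg (fun t => (hgd t).differentiableAt) ?_
    intro t
    rw [(hgd t).deriv, hc]
    have h1 : Real.exp (x (t - 1)) ≤ Real.exp M := Real.exp_le_exp.mpr (hle (t - 1))
    nlinarith
  have hgle : x q - c * q ≤ x (q + 1) - c * (q + 1) := hg (by linarith)
  rw [hxq] at hgle
  linarith
end
end
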